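/- Let γ > 0 and 0 < m² < 4(1+γ), set u_± = −(1 + 1/γ) ± √(1 + γm²)/γ, A = 1 − u_−, B = 1 − u_+, and let u(t) = 1 − 2AB/((A + B) + (A − B) cosh(√(γAB) t/m)) be the homoclinic solution. Then the frequency ω₀(t) = 1/(1 + u(t)) is well defined and satisfies 1/2 ≤ ω₀(t) ≤ 1/(1 + u_+) for all t ∈ ℝ; in particular ω₀ is bounded and bounded away from zero along the homoclinic orbit. -/
import Mathlib


open Real

/-- For `γ > 0`, `0 < m² < 4(1+γ)`, roots `u_±`, `A = 1 − u_−`,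
`B = 1 − u_+` and the homoclinic solution
`u(t) = 1 − 2AB/((A + B) + (A − B) cosh(√(γAB) t/m))`, the frequency
`ω₀(t) = 1/(1 + u(t))` is well defined and satisfies `1/2 ≤ ω₀(t) ≤ 1/(1 + u_+)` for all
`t`; in particular `ω₀` is bounded and bounded away from zero along the homoclinic orbit. -/
theorem frequency_bounded_along_homoclinic (γ m : ℝ) (hγ : 0 < γ)
    (hm₁ : 0 < m ^ 2) (hm₂ : m ^ 2 < 4 * (1 + γ))
    (uplus uminus A B : ℝ)
    (hup : uplus = -(1 + 1 / γ) + Real.sqrt (1 + γ * m ^ 2) / γ)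
    (hum : uminus = -(1 + 1 / γ) - Real.sqrt (1 + γ * m ^ 2) / γ)
    (hA : A = 1 - uminus) (hB : B = 1 - uplus)
    (u : ℝ → ℝ)
    (hu : ∀ t, u t = 1 - 2 * A * B / ((A + B) + (A - B) * Real.cosh (Real.sqrt (γ * A * B) * t / m)))
    (ω₀ : ℝ → ℝ) (hω : ∀ t, ω₀ t = 1 / (1 + u t)) :
    ∀ t : ℝ, 0 < 1 + u t ∧ 1 / 2 ≤ ω₀ t ∧ ω₀ t ≤ 1 / (1 + uplus) := by
  intro t
  set s := Real.sqrt (1 + γ * m ^ 2) with hs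
  have hs1 : 1 < s := by
    nlinarith [Real.sq_sqrt (show (0:ℝ) ≤ 1 + γ * m ^ 2 by positivity),
      Real.sqrt_nonneg (1 + γ * m ^ 2), mul_pos hγ hm₁]
  have hs2 : s < 2 * γ + 1 := by
    rw [hs, Real.sqrt_lt' (by linarith)]
    nlinarith
  have hAval : A = 2 + 1 / γ + s / γ := by rw [hA, hum]; ring
  have hBval : B = 2 + 1 / γ - s / γ := by rw [hB, hup]; ring
  have hγ' : γ ≠ 0 := ne_of_gt hγ
  have hApos : 0 < A := by
    rw [hAval]; positivity
  have hBpos : 0 < B := by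
    rw [hBval]
    have : s / γ < 2 + 1 / γ := by
      rw [div_lt_iff₀ hγ]; field_simp; linarith
    linarith
  have hB2 : B < 2 := by
    rw [hBval]
    have : 1 / γ < s / γ := by gcongr
    linarith
  have hAB : B < A := by
    rw [hAval, hBval]
    have : 0 < s / γ := by positivity
    linarith
  -- denominator
  set c := Real.cosh (Real.sqrt (γ * A * B) * t / m) with hc
  have hc1 : 1 ≤ c := Real.one_le_cosh _
  set D := (A + B) + (A - B) * c with hD
  have hD2A : 2 * A ≤ D := by
    have : (A - B) * 1 ≤ (A - B) * c := by
      apply mul_le_mul_of_nonneg_left hc1 (by linarith)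
    rw [hD]; linarith [this]
  have hDpos : 0 < D := by linarith
  have hut : u t = 1 - 2 * A * B / D := hu t
  have h1u : 1 + u t = 2 - 2 * A * B / D := by rw [hut]; ring
  -- 2AB/D ≤ B since D ≥ 2A
  have hfrac_le : 2 * A * B / D ≤ B := by
    rw [div_le_iff₀ hDpos]
    nlinarith
  have hfrac_pos : 0 < 2 * A * B / D := by positivity
  have hpos : 0 < 1 + u t := by
    rw [h1u]; linarith
  refine ⟨hpos, ?_, ?_⟩
  · rw [hω t]
    have hle2 : 1 + u t ≤ 2 := by rw [h1u]; linarith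
    rw [div_le_div_iff₀ (by norm_num) hpos]
    linarith
  · rw [hω t]
    have hupB : 1 + uplus = 2 - B := by rw [hB]; ring
    have hupos : 0 < 1 + uplus := by rw [hupB]; linarith
    have hge : 1 + uplus ≤ 1 + u t := by
      rw [hupB, h1u]; linarith
    exact one_div_le_one_div_of_le hupos hge
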